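/- If G is a Tutte-Berge simple graph, then every connected component of the induced subgraph of G on D(G) is a single vertex (i.e., D(G) spans no edges). -/
import Mathlib


open Finset

namespace TB

variable {V W : Type*}

/-- A matching of `G` given as a finite set of edges: each element is an edge of `G`
and no two distinct edges share a vertex. -/
def IsMatching (G : SimpleGraph V) (M : Finset (Sym2 V)) : Prop :=
  (∀ e ∈ M, e ∈ G.edgeSet) ∧
    ∀ e ∈ M, ∀ f ∈ M, e ≠ f → ∀ v : V, v ∈ e → v ∉ f

/-- A perfect matching: a matching covering every vertex. -/
def IsPerfectMatching (G : SimpleGraph V) (M : Finset (Sym2 V)) : Prop :=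
  IsMatching G M ∧ ∀ v : V, ∃ e ∈ M, v ∈ e

/-- The matching number `mat(G)`: the maximum size of a matching of `G`. -/
noncomputable def matchingNumber (G : SimpleGraph V) [Fintype V] : ℕ := by
  classical
  exact Finset.univ.powerset.sup fun M => if IsMatching G M then M.card else 0

/-- `T` is an independent set of `G`. -/
def IsIndepSet (G : SimpleGraph V) (T : Finset V) : Prop :=
  ∀ u ∈ T, ∀ v ∈ T, ¬ G.Adj u v

/-- The neighborhood `N_G(T)` of a set of vertices `T`. -/
noncomputable def nbrSet (G : SimpleGraph V) [Fintype V] (T : Finset V) : Finset V := by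
  classical
  exact Finset.univ.filter fun v => ∃ t ∈ T, G.Adj t v

/-- `G` is a Tutte-Berge graph: some independent set `T` satisfies
`|T| = |N_G(T)| + |V(G)| - 2 mat(G)` (written additively to avoid truncated subtraction). -/
noncomputable def TutteBerge (G : SimpleGraph V) [Fintype V] : Prop :=
  ∃ T : Finset V, IsIndepSet G T ∧
    T.card + 2 * matchingNumber G = (nbrSet G T).card + Fintype.card V

/-- `G` is factor-critical: deleting any vertex leaves a graph with a perfect matching. -/
def FactorCritical (G : SimpleGraph V) : Prop :=
  ∀ v : V, ∃ M, IsPerfectMatching (G.induce {x | x ≠ v}) M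

/-- The Gallai-Edmonds set `D(G)`: vertices missed by at least one maximum matching. -/
noncomputable def gallaiD (G : SimpleGraph V) [Fintype V] : Finset V := by
  classical
  exact Finset.univ.filter fun v =>
    ∃ M, IsMatching G M ∧ M.card = matchingNumber G ∧ ∀ e ∈ M, v ∉ e

/-- The cone `G*` over `G`: a new apex vertex (`none`) joined to every vertex of `G`. -/
def cone (G : SimpleGraph V) : SimpleGraph (Option V) :=
  SimpleGraph.fromRel fun a b =>
    a = none ∨ ∃ u v, a = some u ∧ b = some v ∧ G.Adj u v

/-- The edge polytope `P_H`: convex hull of the points `e_u + e_v` over edges `{u,v}` of `H`. -/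
noncomputable def edgePolytope (H : SimpleGraph W) : Set (W → ℝ) := by
  classical
  exact convexHull ℝ
    {x | ∃ u v, H.Adj u v ∧
      x = fun w => (if w = u then (1 : ℝ) else 0) + (if w = v then (1 : ℝ) else 0)}

/-- Every connected component of `H` contains an odd cycle. -/
def HasOddCycleComponents (H : SimpleGraph W) : Prop :=
  ∀ c : H.ConnectedComponent, ∃ u, u ∈ c.supp ∧ ∃ p : H.Walk u u, p.IsCycle ∧ Odd p.length

/-- The neighborhood of a set of vertices, as a set. -/
def nbrSetSet (H : SimpleGraph W) (T : Set W) : Set W := {w | ∃ t ∈ T, H.Adj t w}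

/-- The bipartite graph `B_H(T)` induced by `T`: vertex set `T ∪ N_H(T)`,
with the edges of `H` joining a vertex of `T` to a vertex of `N_H(T)`. -/
def inducedBipartite (H : SimpleGraph W) (T : Set W) :
    SimpleGraph ↥(T ∪ nbrSetSet H T) :=
  SimpleGraph.fromRel fun a b => (a : W) ∈ T ∧ H.Adj a b

/-- An independent set `T` is fundamental in `H` if `B_H(T)` is connected (trivially so
if empty) and, when `T ∪ N_H(T) ≠ V(H)`, each connected component of
`H \ (T ∪ N_H(T))` contains an odd cycle. -/
def Fundamental (H : SimpleGraph W) (T : Set W) : Prop :=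
  (∀ u ∈ T, ∀ v ∈ T, ¬ H.Adj u v) ∧
  (inducedBipartite H T).Preconnected ∧
  (T ∪ nbrSetSet H T ≠ Set.univ →
    HasOddCycleComponents (H.induce (T ∪ nbrSetSet H T)ᶜ))


/-- if `G` is Tutte-Berge, then `D(G)` spans no edges, i.e. every connected
component of the induced subgraph on `D(G)` is a single vertex. -/
theorem gallaiD_no_edges_of_tutteBerge {V : Type*} [Fintype V] (G : SimpleGraph V)
    (hG : TutteBerge G) :
    ∀ u ∈ gallaiD G, ∀ v ∈ gallaiD G, ¬ G.Adj u v := by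
  classical
  obtain ⟨T, hInd, hEq⟩ := hG
  suffices hsub : ∀ u ∈ gallaiD G, u ∈ T by
    intro u hu v hv
    exact hInd u (hsub u hu) v (hsub v hv)
  intro u hu
  simp only [gallaiD, mem_filter] at hu
  obtain ⟨-, M, hM, hMcard, hMu⟩ := hu
  set matched : Finset V := M.biUnion (fun e => univ.filter (· ∈ e)) with hmatched_def
  have hmem_matched : ∀ v : V, v ∈ matched ↔ ∃ e ∈ M, v ∈ e := by
    intro v
    simp [hmatched_def]
  -- card of matched = 2 * M.card
  have hcard_matched : matched.card = 2 * M.card := by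
    rw [hmatched_def, card_biUnion]
    · rw [Finset.sum_congr rfl (fun e he => ?_), Finset.sum_const, smul_eq_mul, mul_comm]
      have heE : e ∈ G.edgeSet := hM.1 e he
      induction e using Sym2.ind with
      | _ a b =>
        have hab : G.Adj a b := heE
        have hne : a ≠ b := hab.ne
        have : univ.filter (· ∈ s(a, b)) = {a, b} := by
          ext x
          simp [Sym2.mem_iff]
        rw [this, card_insert_of_notMem (by simp [hne]), card_singleton]
    · intro e he f hf hef
      simp only [Finset.disjoint_left, mem_filter, mem_univ, true_and]
      intro v hve hvf
      exact hM.2 e he f hf hef v hve hvf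
  -- injection from T ∩ matched into nbrSet G T
  have hTM : (T ∩ matched).card ≤ (nbrSet G T).card := by
    set P : V → V → Prop := fun v w => w ∈ nbrSet G T ∧ ∃ e ∈ M, v ∈ e ∧ w ∈ e ∧ w ≠ v
      with hP
    have hex : ∀ v ∈ T ∩ matched, ∃ w, P v w := by
      intro v hv
      obtain ⟨hvT, hvm⟩ := mem_inter.1 hv
      obtain ⟨e, he, hve⟩ := (hmem_matched v).1 hvm
      refine ⟨Sym2.Mem.other hve, ?_, e, he, hve, Sym2.other_mem hve, ?_⟩
      · have hadj : G.Adj v (Sym2.Mem.other hve) := by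
          have := Sym2.other_spec hve
          rw [← SimpleGraph.mem_edgeSet, this]
          exact hM.1 e he
        exact mem_filter.2 ⟨mem_univ _, v, hvT, hadj⟩
      · have hadj : G.Adj v (Sym2.Mem.other hve) := by
          have := Sym2.other_spec hve
          rw [← SimpleGraph.mem_edgeSet, this]
          exact hM.1 e he
        exact hadj.ne'
    refine Finset.card_le_card_of_injOn
      (fun v => if h : ∃ w, P v w then h.choose else v) ?_ ?_
    · intro v hv
      simp only
      rw [dif_pos (hex v hv)]
      exact (hex v hv).choose_spec.1
    · intro v1 hv1 v2 hv2 hfeq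
      simp only [Finset.coe_inter, Set.mem_inter_iff, Finset.mem_coe] at hv1 hv2
      have h1 := hex v1 (mem_inter.2 ⟨hv1.1, hv1.2⟩)
      have h2 := hex v2 (mem_inter.2 ⟨hv2.1, hv2.2⟩)
      simp only at hfeq
      rw [dif_pos h1, dif_pos h2] at hfeq
      obtain ⟨-, e1, he1, hv1e, hw1e, hw1ne⟩ := h1.choose_spec
      obtain ⟨-, e2, he2, hv2e, hw2e, hw2ne⟩ := h2.choose_spec
      rw [hfeq] at hw1e hw1ne
      have he12 : e1 = e2 := by
        by_contra hne
        exact hM.2 e1 he1 e2 he2 hne _ hw1e hw2e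
      subst he12
      have hspec : s(v1, h2.choose) = e1 := by
        have h1v : v1 ∈ e1 := hv1e
        induction e1 using Sym2.ind with
        | _ a b =>
          rw [Sym2.mem_iff] at h1v hw1e
          rcases h1v with rfl | rfl <;> rcases hw1e with h | h <;>
            simp_all [Sym2.eq_swap]
      rw [← hspec, Sym2.mem_iff] at hv2e
      rcases hv2e with rfl | h
      · rfl
      · exact absurd h.symm hw2ne
  -- arithmetic
  have humatched : u ∉ matched := by
    rw [hmem_matched]
    rintro ⟨e, he, hue⟩
    exact hMu e he hue
  set U : Finset V := univ \ matched with hU_def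
  have hUcard : U.card + matched.card = Fintype.card V := by
    rw [hU_def, card_sdiff_add_card_eq_card (subset_univ _), card_univ]
  have hTsplit : (T ∩ matched).card + (T \ matched).card = T.card :=
    card_inter_add_card_sdiff T matched
  have hTsubU : T \ matched ⊆ U := fun x hx =>
    mem_sdiff.2 ⟨mem_univ _, (mem_sdiff.1 hx).2⟩
  have hcardle : U.card ≤ (T \ matched).card := by omega
  have : T \ matched = U := Finset.eq_of_subset_of_card_le hTsubU hcardle
  have huU : u ∈ U := mem_sdiff.2 ⟨mem_univ _, humatched⟩
  rw [← this] at huU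
  exact (mem_sdiff.1 huU).1

end TB
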